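/- arXiv:2407.16993 — 2 statements merged into one kernel-verified Lean document; each statement's English description precedes it below -/
import Mathlib

section
/- Proposition 2. Let {ι_i : {0,…,n−1} → {0,…,N−1}}_{i=0}^{m−1} be a window partition (each ι_i injective, ranges pairwise disjoint and covering {0,…,N−1}). Let Q, K, V be Ĉ×N real matrices, and for each window i let Q̃_i, K̃_i, Ṽ_i be the Ĉ×n matrices with Q̃_i(c,j) = Q(c, ι_i(j)) (likewise for K̃_i, Ṽ_i), and let Q̈_i, K̈_i, V̈_i be their zero-paddings along ι_i. Define the per-window attention outputs Õ_i = rowSoftmax(Q̃_i · K̃_iᵀ) · Ṽ_i and the padded outputs Ö_i = rowSoftmax(Q̈_i · K̈_iᵀ) · V̈_i. Then the window-reverse of {Õ_i} equals Σ_{i=0}^{m−1} Ö_i; that is, local channel-wise self-attention computed independently within each window and then window-reversed coincides with the aggregation of the channel-wise self-attentions of the zero-padded (band-pass-filtered) features. -/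
open Matrix

/-- Row-wise softmax of a real matrix. -/
noncomputable def rowSoftmax {a b : ℕ} (M : Matrix (Fin a) (Fin b) ℝ) :
    Matrix (Fin a) (Fin b) ℝ :=
  Matrix.of fun i j => Real.exp (M i j) / ∑ j', Real.exp (M i j')

/-- `Ap` is the zero-padding of the `Ĉ×n` matrix `A` along the injection `ι`:
columns of `A` are placed at positions `ι j` and all other columns are zero. -/
def IsZeroPad {C n N : ℕ} (ι : Fin n → Fin N) (A : Matrix (Fin C) (Fin n) ℝ)
    (Ap : Matrix (Fin C) (Fin N) ℝ) : Prop :=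
  (∀ c j, Ap c (ι j) = A c j) ∧ (∀ c k, (∀ j, ι j ≠ k) → Ap c k = 0)

/-- `ι` is a window partition of `N` token positions into `m` windows of size `n`:
each `ι i` is injective, ranges are pairwise disjoint, and the ranges cover everything. -/
def IsWindowPartition {m n N : ℕ} (ι : Fin m → Fin n → Fin N) : Prop :=
  (∀ i, Function.Injective (ι i)) ∧
  (∀ i i', i ≠ i' → ∀ j j', ι i j ≠ ι i' j') ∧
  (∀ k : Fin N, ∃ i j, ι i j = k)

/-- The restriction of a `Ĉ×N` matrix to the window `ι`. -/
def windowRestrict {C n N : ℕ} (ι : Fin n → Fin N) (A : Matrix (Fin C) (Fin N) ℝ) :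
    Matrix (Fin C) (Fin n) ℝ :=
  Matrix.of fun c j => A c (ι j)

/-- Proposition 2: local channel-wise self-attention computed independently within each
window and then window-reversed coincides with the aggregation of the channel-wise
self-attentions of the zero-padded (band-pass-filtered) features. -/
theorem localSA_windowReverse_eq_sum_padded_SA {C m n N : ℕ}
    (ι : Fin m → Fin n → Fin N) (hι : IsWindowPartition ι)
    (Q K V : Matrix (Fin C) (Fin N) ℝ)
    (Qp Kp Vp : Fin m → Matrix (Fin C) (Fin N) ℝ)
    (hQp : ∀ i, IsZeroPad (ι i) (windowRestrict (ι i) Q) (Qp i))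
    (hKp : ∀ i, IsZeroPad (ι i) (windowRestrict (ι i) K) (Kp i))
    (hVp : ∀ i, IsZeroPad (ι i) (windowRestrict (ι i) V) (Vp i))
    (Ot : Fin m → Matrix (Fin C) (Fin n) ℝ)
    (hOt : ∀ i, Ot i =
      rowSoftmax (windowRestrict (ι i) Q * (windowRestrict (ι i) K)ᵀ) * windowRestrict (ι i) V)
    (Op : Fin m → Matrix (Fin C) (Fin N) ℝ)
    (hOp : ∀ i, Op i = rowSoftmax (Qp i * (Kp i)ᵀ) * Vp i)
    (W : Matrix (Fin C) (Fin N) ℝ)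
    (hW : ∀ i c j, W c (ι i j) = Ot i c j) :
    W = ∑ i, Op i := by
  obtain ⟨hinj, hdisj, hcover⟩ := hι
  have hkey : ∀ i, Qp i * (Kp i)ᵀ =
      windowRestrict (ι i) Q * (windowRestrict (ι i) K)ᵀ := by
    intro i
    ext c1 c2
    simp only [Matrix.mul_apply, Matrix.transpose_apply, windowRestrict, Matrix.of_apply]
    calc ∑ k, Qp i c1 k * Kp i c2 k
        = ∑ k ∈ Finset.univ.image (ι i), Qp i c1 k * Kp i c2 k :=
          (Finset.sum_subset (Finset.subset_univ _) (fun k _ hk => by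
            have hne : ∀ j, ι i j ≠ k := fun j h =>
              hk (Finset.mem_image.2 ⟨j, Finset.mem_univ _, h⟩)
            rw [(hQp i).2 c1 k hne, zero_mul])).symm
      _ = ∑ j, Qp i c1 (ι i j) * Kp i c2 (ι i j) :=
          Finset.sum_image (fun x _ y _ h => hinj i h)
      _ = ∑ j, Q c1 (ι i j) * K c2 (ι i j) := by
          refine Finset.sum_congr rfl fun j _ => ?_
          rw [(hQp i).1 c1 j, (hKp i).1 c2 j]; rfl
  funext c k
  obtain ⟨i₀, j₀, hij⟩ := hcover k
  have hOpi : ∀ i, i ≠ i₀ → Op i c k = 0 := by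
    intro i hi
    rw [hOp, Matrix.mul_apply]
    refine Finset.sum_eq_zero fun c' _ => ?_
    have hne : ∀ j, ι i j ≠ k := fun j h => hdisj i i₀ hi j j₀ (h.trans hij.symm)
    rw [(hVp i).2 c' k hne, mul_zero]
  have hOp0 : Op i₀ c k = W c k := by
    rw [hOp, hkey, ← hij, hW, hOt, Matrix.mul_apply, Matrix.mul_apply]
    refine Finset.sum_congr rfl fun c' _ => ?_
    rw [(hVp i₀).1 c' j₀]
  rw [Matrix.sum_apply,
    Finset.sum_eq_single i₀ (fun i _ hi => hOpi i hi)
      (fun h => absurd (Finset.mem_univ i₀) h), hOp0]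
end

section
/- Let {ι_i : {0,…,n−1} → {0,…,N−1}}_{i=0}^{m−1} be a window partition, let H ≥ 1 with N = H (frequency tokens indexed by {0,…,N−1}), and let D be an N×N real matrix with D·Dᵀ = 1 and Dᵀ·D = 1. With Q, K, V, Õ_i, Ö_i as in Proposition 2 (per-window outputs Õ_i = rowSoftmax(Q̃_i·K̃_iᵀ)·Ṽ_i and padded outputs Ö_i = rowSoftmax(Q̈_i·K̈_iᵀ)·V̈_i), let W be the window-reverse of {Õ_i}. Then W · Dᵀ = Σ_{i=0}^{m−1} (Ö_i · Dᵀ). That is, transforming the window-reversed local-attention output back to the spatial domain by the inverse transform equals the sum over windows of the spatial-domain outputs obtained from each zero-padded (filtered) component. -/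
open Matrix

lemma sum_zeropad' {n N : ℕ} {ι : Fin n → Fin N} (hinj : Function.Injective ι)
    (f : Fin N → ℝ) (hf : ∀ k, (∀ j, ι j ≠ k) → f k = 0) :
    ∑ k, f k = ∑ j, f (ι j) := by
  rw [← Finset.sum_image (fun x _ y _ h => hinj h)]
  refine (Finset.sum_subset (Finset.subset_univ _) ?_).symm
  intro k _ hk
  exact hf k (fun j hj => hk (Finset.mem_image.mpr ⟨j, Finset.mem_univ j, hj⟩))

/-- Transforming the window-reversed local-attention output back to the spatial domain
by the inverse transform equals the sum over windows of the spatial-domain outputs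
obtained from each zero-padded (filtered) component: `W · Dᵀ = Σ_i Ö_i · Dᵀ`. -/
theorem windowReverse_idct_eq_sum_padded_idct {C m n N : ℕ}
    (ι : Fin m → Fin n → Fin N) (hι : IsWindowPartition ι)
    (H : ℕ) (hH : 1 ≤ H) (hN : N = H)
    (D : Matrix (Fin N) (Fin N) ℝ) (hD1 : D * Dᵀ = 1) (hD2 : Dᵀ * D = 1)
    (Q K V : Matrix (Fin C) (Fin N) ℝ)
    (Qp Kp Vp : Fin m → Matrix (Fin C) (Fin N) ℝ)
    (hQp : ∀ i, IsZeroPad (ι i) (windowRestrict (ι i) Q) (Qp i))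
    (hKp : ∀ i, IsZeroPad (ι i) (windowRestrict (ι i) K) (Kp i))
    (hVp : ∀ i, IsZeroPad (ι i) (windowRestrict (ι i) V) (Vp i))
    (Ot : Fin m → Matrix (Fin C) (Fin n) ℝ)
    (hOt : ∀ i, Ot i =
      rowSoftmax (windowRestrict (ι i) Q * (windowRestrict (ι i) K)ᵀ) * windowRestrict (ι i) V)
    (Op : Fin m → Matrix (Fin C) (Fin N) ℝ)
    (hOp : ∀ i, Op i = rowSoftmax (Qp i * (Kp i)ᵀ) * Vp i)
    (W : Matrix (Fin C) (Fin N) ℝ)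
    (hW : ∀ i c j, W c (ι i j) = Ot i c j) :
    W * Dᵀ = ∑ i, Op i * Dᵀ := by
  have h1 := hι.1
  have h2 := hι.2.1
  have hsoft : ∀ i, Qp i * (Kp i)ᵀ =
      windowRestrict (ι i) Q * (windowRestrict (ι i) K)ᵀ := by
    intro i
    ext c c'
    simp only [Matrix.mul_apply, Matrix.transpose_apply]
    rw [sum_zeropad' (h1 i) (fun k => Qp i c k * Kp i c' k)
      (fun k hk => by show Qp i c k * Kp i c' k = 0; rw [(hQp i).2 c k hk, zero_mul])]
    refine Finset.sum_congr rfl (fun j _ => ?_)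
    show Qp i c (ι i j) * Kp i c' (ι i j) = _
    rw [(hQp i).1, (hKp i).1]
  have hOpval : ∀ i c j, Op i c (ι i j) = Ot i c j := by
    intro i c j
    rw [hOp, hOt, hsoft]
    simp only [Matrix.mul_apply]
    refine Finset.sum_congr rfl (fun c' _ => ?_)
    rw [(hVp i).1]
  have hOpzero : ∀ i c k, (∀ j, ι i j ≠ k) → Op i c k = 0 := by
    intro i c k hk
    rw [hOp]
    simp only [Matrix.mul_apply]
    refine Finset.sum_eq_zero (fun c' _ => ?_)
    rw [(hVp i).2 c' k hk, mul_zero]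
  have hWs : W = ∑ i, Op i := by
    ext c k
    obtain ⟨i0, j0, rfl⟩ := hι.2.2 k
    rw [hW, Matrix.sum_apply]
    rw [Finset.sum_eq_single i0]
    · exact (hOpval i0 c j0).symm
    · intro i _ hne
      exact hOpzero i c (ι i0 j0) (fun j => h2 i i0 hne j j0)
    · intro h; exact absurd (Finset.mem_univ i0) h
  rw [hWs, Matrix.sum_mul]
end
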